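/- Let m, n be natural numbers with 2 ≤ m ≤ n, and let V = ℝ^{1+m+n} with coordinates (x_0, x_1, …, x_m, y_1, …, y_n) and corresponding coordinate linear functionals x_0^*, …, x_m^*, y_1^*, …, y_n^* and coordinate basis vectors e_{x_0}, …, e_{x_m}, e_{y_1}, …, e_{y_n}. Fix real numbers y_1, …, y_m and let D ⊆ V be the linear span of the vector u_0 = e_{x_0} + y_1 e_{x_1} + … + y_m e_{x_m} together with e_{y_1}, …, e_{y_n}. Then for a linear functional α : V → ℝ the following are equivalent: (i) for every i ∈ {1, …, m} and all u, v, w ∈ D, the determinant of the 3×3 matrix whose rows are (α(u), α(v), α(w)), (x_0^*(u), x_0^*(v), x_0^*(w)), and (y_i^*(u), y_i^*(v), y_i^*(w)) vanishes; (ii) α lies in the linear span of x_0^*, x_1^*, …, x_m^*. -/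
import Mathlib


/-- Index of the coordinate `x_0` in `ℝ^{1+m+n}`. -/
def ix0 (m n : ℕ) : Fin (1 + m + n) := ⟨0, by omega⟩

/-- Index of the coordinate `x_i` (`1 ≤ i ≤ m`) in `ℝ^{1+m+n}`. -/
def ixX (m n : ℕ) (i : Fin m) : Fin (1 + m + n) := ⟨1 + i, by have := i.isLt; omega⟩

/-- Index of the coordinate `y_j` (`1 ≤ j ≤ n`) in `ℝ^{1+m+n}`. -/
def ixY (m n : ℕ) (j : Fin n) : Fin (1 + m + n) := ⟨1 + m + j, by have := j.isLt; omega⟩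

/-- The vector `u_0 = e_{x_0} + y_1 e_{x_1} + … + y_m e_{x_m}`. -/
def u0 (m n : ℕ) (yc : Fin m → ℝ) : Fin (1 + m + n) → ℝ :=
  Pi.single (ix0 m n) 1 + ∑ i : Fin m, yc i • (Pi.single (ixX m n i) (1 : ℝ) : Fin (1 + m + n) → ℝ)

/-- The subspace `D ⊆ ℝ^{1+m+n}` spanned by `u_0` and `e_{y_1}, …, e_{y_n}`. -/
def Dsub (m n : ℕ) (yc : Fin m → ℝ) : Submodule ℝ (Fin (1 + m + n) → ℝ) :=
  Submodule.span ℝ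
    ({u0 m n yc} ∪ Set.range fun j : Fin n => Pi.single (ixY m n j) (1 : ℝ))

lemma ix0_ne_ixX (m n : ℕ) (i : Fin m) : ix0 m n ≠ ixX m n i := by
  simp [ix0, ixX, Fin.ext_iff]; omega

lemma ix0_ne_ixY (m n : ℕ) (j : Fin n) : ix0 m n ≠ ixY m n j := by
  simp [ix0, ixY, Fin.ext_iff]; omega

lemma ixY_ne_ix0 (m n : ℕ) (j : Fin n) : ixY m n j ≠ ix0 m n :=
  (ix0_ne_ixY m n j).symm

lemma ixX_ne_ixY (m n : ℕ) (i : Fin m) (j : Fin n) : ixX m n i ≠ ixY m n j := by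
  have := i.isLt
  simp [ixX, ixY, Fin.ext_iff]; omega

lemma ixY_ne_ixY (m n : ℕ) {j j' : Fin n} (h : j ≠ j') : ixY m n j ≠ ixY m n j' := by
  simp [ixY, Fin.ext_iff]
  intro hc
  exact h (Fin.ext (by omega))

lemma u0_apply_ix0 (m n : ℕ) (yc : Fin m → ℝ) : u0 m n yc (ix0 m n) = 1 := by
  simp only [u0, Pi.add_apply, Finset.sum_apply, Pi.smul_apply, Pi.single_eq_same]
  rw [Finset.sum_eq_zero, add_zero]
  intro i _
  rw [Pi.single_eq_of_ne (ix0_ne_ixX m n i), smul_zero]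

lemma u0_apply_ixY (m n : ℕ) (yc : Fin m → ℝ) (j : Fin n) : u0 m n yc (ixY m n j) = 0 := by
  simp only [u0, Pi.add_apply, Finset.sum_apply, Pi.smul_apply]
  rw [Pi.single_eq_of_ne (ixY_ne_ix0 m n j), Finset.sum_eq_zero, add_zero]
  intro i _
  rw [Pi.single_eq_of_ne (ixX_ne_ixY m n i j).symm, smul_zero]

/-- For a linear functional `α` on `ℝ^{1+m+n}`, the conditions
`(α ∧ dx_0 ∧ dy_i)|_D = 0` for `i = 1, …, m` hold iff `α` lies in the span of
`x_0^*, x_1^*, …, x_m^*`. -/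
theorem covariant_subdistribution (m n : ℕ) (hm : 2 ≤ m) (hmn : m ≤ n)
    (yc : Fin m → ℝ) (α : (Fin (1 + m + n) → ℝ) →ₗ[ℝ] ℝ) :
    (∀ i : Fin m, ∀ u v w : Fin (1 + m + n) → ℝ,
        u ∈ Dsub m n yc → v ∈ Dsub m n yc → w ∈ Dsub m n yc →
        Matrix.det !![α u, α v, α w;
            u (ix0 m n), v (ix0 m n), w (ix0 m n);
            u (ixY m n (Fin.castLE hmn i)), v (ixY m n (Fin.castLE hmn i)),
              w (ixY m n (Fin.castLE hmn i))] = 0)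
      ↔ α ∈ Submodule.span ℝ
          ({(LinearMap.proj (ix0 m n) : (Fin (1 + m + n) → ℝ) →ₗ[ℝ] ℝ)} ∪
            Set.range fun i : Fin m =>
              (LinearMap.proj (ixX m n i) : (Fin (1 + m + n) → ℝ) →ₗ[ℝ] ℝ)) := by
  constructor
  · intro h
    -- First show α vanishes on all e_{y_j}
    have hyzero : ∀ j : Fin n, α (Pi.single (ixY m n j) 1) = 0 := by
      intro j
      obtain ⟨i, hi⟩ : ∃ i : Fin m, (Fin.castLE hmn i : Fin n) ≠ j := by
        rcases eq_or_ne (j : ℕ) 0 with h0 | h0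
        · exact ⟨⟨1, by omega⟩, by simp [Fin.ext_iff, h0]⟩
        · exact ⟨⟨0, by omega⟩, by simp [Fin.ext_iff]; omega⟩
      have hu : u0 m n yc ∈ Dsub m n yc := Submodule.subset_span (Or.inl rfl)
      have hv : (Pi.single (ixY m n j) (1:ℝ) : Fin (1+m+n) → ℝ) ∈ Dsub m n yc :=
        Submodule.subset_span (Or.inr ⟨j, rfl⟩)
      have hw : (Pi.single (ixY m n (Fin.castLE hmn i)) (1:ℝ) : Fin (1+m+n) → ℝ)
          ∈ Dsub m n yc := Submodule.subset_span (Or.inr ⟨Fin.castLE hmn i, rfl⟩)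
      have hdet := h i _ _ _ hu hv hw
      rw [u0_apply_ix0, u0_apply_ixY,
        Pi.single_eq_of_ne (ix0_ne_ixY m n j),
        Pi.single_eq_of_ne (ix0_ne_ixY m n (Fin.castLE hmn i)),
        Pi.single_eq_of_ne (ixY_ne_ixY m n hi),
        Pi.single_eq_same] at hdet
      simp [Matrix.det_fin_three, Matrix.vecHead, Matrix.vecTail] at hdet
      linarith [hdet]
    -- Now express α as a combination of coordinate projections
    have hrepr : α = ∑ k : Fin (1+m+n),
        α (Pi.single k 1) • (LinearMap.proj k : (Fin (1+m+n) → ℝ) →ₗ[ℝ] ℝ) := by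
      refine LinearMap.ext fun x => ?_
      rw [LinearMap.pi_apply_eq_sum_univ α x]
      simp only [LinearMap.coe_sum, Finset.sum_apply, LinearMap.smul_apply,
        LinearMap.proj_apply, smul_eq_mul]
      refine Finset.sum_congr rfl fun k _ => ?_
      have : (fun j => if k = j then (1:ℝ) else 0) = Pi.single k 1 := by
        funext j'; simp [Pi.single_apply, eq_comm]
      rw [this]; ring
    rw [hrepr]
    refine Submodule.sum_mem _ fun k _ => ?_
    by_cases hk0 : (k : ℕ) = 0
    · have : k = ix0 m n := Fin.ext (by simpa [ix0] using hk0)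
      rw [this]
      exact Submodule.smul_mem _ _ (Submodule.subset_span (Or.inl rfl))
    by_cases hkm : (k : ℕ) < 1 + m
    · have hik : k = ixX m n ⟨(k : ℕ) - 1, by omega⟩ := Fin.ext (by simp [ixX]; omega)
      rw [hik]
      exact Submodule.smul_mem _ _
        (Submodule.subset_span (Or.inr ⟨⟨(k : ℕ) - 1, by omega⟩, rfl⟩))
    · have hik : k = ixY m n ⟨(k : ℕ) - (1 + m), by have := k.isLt; omega⟩ :=
        Fin.ext (by simp [ixY]; omega)
      rw [hik, hyzero, zero_smul]
      exact Submodule.zero_mem _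
  · intro hα
    -- α vanishes on all e_{y_j}
    have hyzero : ∀ j : Fin n, α (Pi.single (ixY m n j) 1) = 0 := by
      intro j
      induction hα using Submodule.span_induction with
      | mem β hβ =>
        rcases hβ with hβ | ⟨i, rfl⟩
        · rw [Set.mem_singleton_iff] at hβ
          subst hβ
          rw [LinearMap.proj_apply, Pi.single_apply, if_neg (ix0_ne_ixY m n j)]
        · rw [LinearMap.proj_apply, Pi.single_apply, if_neg (ixX_ne_ixY m n i j)]
      | zero => simp
      | add β γ _ _ hβ hγ => simp [hβ, hγ]
      | smul c β _ hβ => simp [hβ]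
    -- On D, α u = α(u0) * u(x0)
    have hlin : ∀ u ∈ Dsub m n yc, α u = α (u0 m n yc) * u (ix0 m n) := by
      intro u hu
      induction hu using Submodule.span_induction with
      | mem v hv =>
        rcases hv with hv | ⟨j, rfl⟩
        · rw [Set.mem_singleton_iff] at hv
          rw [hv, u0_apply_ix0, mul_one]
        · simp only []
          rw [hyzero j, Pi.single_eq_of_ne (ix0_ne_ixY m n j), mul_zero]
      | zero => simp
      | add v w _ _ hv hw => simp [map_add, hv, hw]; ring
      | smul c v _ hv => simp [map_smul, hv]; ring
    intro i u v w hu hv hw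
    rw [hlin u hu, hlin v hv, hlin w hw]
    simp [Matrix.det_fin_three]
    ring
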